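/- (Quantitative mean-shift improvement.) Let n ≥ 1, d ≥ 1, p₁,…,pₙ ∈ ℝ^d, and y ∈ ℝ^d. Define y' = (Σ_{i=1}^n pᵢ · exp(−‖y−pᵢ‖²)) / (Σ_{i=1}^n exp(−‖y−pᵢ‖²)). Then G_P(y') − G_P(y) ≥ G_P(y) · ‖y' − y‖². -/

import Mathlib

open scoped BigOperators

theorem stmt_2 (n d : ℕ) (hn : 1 ≤ n) (hd : 1 ≤ d)
    (p : Fin n → EuclideanSpace ℝ (Fin d)) (y y' : EuclideanSpace ℝ (Fin d))
    (hy' : y' = (∑ i, Real.exp (-‖y - p i‖ ^ 2))⁻¹ •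
      ∑ i, Real.exp (-‖y - p i‖ ^ 2) • p i) :
    ∑ i, Real.exp (-‖y' - p i‖ ^ 2) - ∑ i, Real.exp (-‖y - p i‖ ^ 2) ≥
      (∑ i, Real.exp (-‖y - p i‖ ^ 2)) * ‖y' - y‖ ^ 2 := by
  haveI : NeZero n := ⟨by omega⟩
  set w : Fin n → ℝ := fun i => Real.exp (-‖y - p i‖ ^ 2) with hw
  have hwpos : ∀ i, 0 < w i := fun i => Real.exp_pos _
  have hW : 0 < ∑ i, w i :=
    Finset.sum_pos (fun i _ => hwpos i) Finset.univ_nonempty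
  set v : EuclideanSpace ℝ (Fin d) := y' - y with hv
  have hsum : (∑ i, w i) • y' = ∑ i, w i • p i := by
    rw [hy', smul_smul, mul_inv_cancel₀ hW.ne', one_smul]
  have key : ∑ i, w i * (inner ℝ v (y - p i) : ℝ) = -((∑ i, w i) * ‖v‖ ^ 2) := by
    have h1 : ∑ i, w i * (inner ℝ v (y - p i) : ℝ)
        = (inner ℝ v (∑ i, w i • (y - p i)) : ℝ) := by
      rw [inner_sum]
      refine Finset.sum_congr rfl fun i _ => ?_
      rw [real_inner_smul_right]
    have h2 : ∑ i, w i • (y - p i) = (∑ i, w i) • y - (∑ i, w i) • y' := by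
      rw [hsum, Finset.sum_smul, ← Finset.sum_sub_distrib]
      exact Finset.sum_congr rfl fun i _ => (smul_sub (w i) y (p i))
    rw [h1, h2, ← smul_sub, real_inner_smul_right]
    have : y - y' = -v := by rw [hv]; abel
    rw [this, inner_neg_right, real_inner_self_eq_norm_sq]
    ring
  have hpt : ∀ i, w i * (1 + (-(2 * (inner ℝ v (y - p i) : ℝ)) - ‖v‖ ^ 2))
      ≤ Real.exp (-‖y' - p i‖ ^ 2) := by
    intro i
    have hexp : Real.exp (-‖y' - p i‖ ^ 2)
        = w i * Real.exp (-(2 * (inner ℝ v (y - p i) : ℝ)) - ‖v‖ ^ 2) := by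
      rw [hw, ← Real.exp_add]
      congr 1
      have : y' - p i = v + (y - p i) := by rw [hv]; abel
      rw [this, norm_add_sq_real]
      ring
    rw [hexp]
    refine mul_le_mul_of_nonneg_left ?_ (hwpos i).le
    have := Real.add_one_le_exp (-(2 * (inner ℝ v (y - p i) : ℝ)) - ‖v‖ ^ 2)
    linarith
  have hle : (∑ i, w i) + (∑ i, w i) * ‖v‖ ^ 2 ≤ ∑ i, Real.exp (-‖y' - p i‖ ^ 2) := by
    calc (∑ i, w i) + (∑ i, w i) * ‖v‖ ^ 2
        = ∑ i, w i * (1 + (-(2 * (inner ℝ v (y - p i) : ℝ)) - ‖v‖ ^ 2)) := by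
          have : ∑ i, w i * (1 + (-(2 * (inner ℝ v (y - p i) : ℝ)) - ‖v‖ ^ 2))
              = (∑ i, w i) - 2 * (∑ i, w i * (inner ℝ v (y - p i) : ℝ))
                - (∑ i, w i) * ‖v‖ ^ 2 := by
            rw [Finset.mul_sum, Finset.sum_mul, ← Finset.sum_sub_distrib,
              ← Finset.sum_sub_distrib]
            refine Finset.sum_congr rfl fun i _ => ?_
            ring
          rw [this, key]; ring
      _ ≤ ∑ i, Real.exp (-‖y' - p i‖ ^ 2) := Finset.sum_le_sum fun i _ => hpt i
  have : ‖y' - y‖ = ‖v‖ := by rw [hv]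
  rw [ge_iff_le, this]
  linarith
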